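/- Let (X, x₀) be a pointed topological space. If π₁^wh(X, x₀) is Hausdorff, then π₁^wh(X, x₀) is totally separated: for any two distinct points a, b there is a clopen set containing a but not b. -/

import Mathlib

open Set TopologicalSpace

attribute [local instance] Path.Homotopic.setoid

universe u v

variable {X : Type u} [TopologicalSpace X]

/-- The basic whisker-topology set `B([ζ],U)`: all classes of the form `[ζ·η]`
where `η` is a loop based at `x₀` with image in `U`. -/
def whiskerB {x₀ : X} (ζ : Path.Homotopic.Quotient x₀ x₀) (U : Set X) :
    Set (Path.Homotopic.Quotient x₀ x₀) :=
  {g | ∃ η : Path x₀ x₀, Set.range η ⊆ U ∧ g = Path.Homotopic.Quotient.trans ζ ⟦η⟧}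

/-- The whisker topology on `π₁(X, x₀)`, generated by the basic sets `B([ζ],U)`
for `U` an open neighborhood of `x₀`. -/
def whiskerTopology (x₀ : X) : TopologicalSpace (Path.Homotopic.Quotient x₀ x₀) :=
  TopologicalSpace.generateFrom
    {S | ∃ (ζ : Path.Homotopic.Quotient x₀ x₀) (U : Set X),
      IsOpen U ∧ x₀ ∈ U ∧ S = whiskerB ζ U}

/-- Inversion `[ζ] ↦ [ζ⁻]` on `π₁(X, x₀)`. -/
def whiskerInv {x₀ : X} : Path.Homotopic.Quotient x₀ x₀ → Path.Homotopic.Quotient x₀ x₀ :=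
  Quotient.map Path.symm (fun _ _ h => Nonempty.map Path.Homotopy.symm₂ h)

/-- `π₁^wh(X, x₀)` is a topological group: the multiplication `([ζ],[η]) ↦ [ζ·η]`
is jointly continuous and inversion `[ζ] ↦ [ζ⁻]` is continuous, with respect to
the whisker topology. -/
def IsWhiskerTopGroup (x₀ : X) : Prop :=
  letI := whiskerTopology x₀
  Continuous (fun p : Path.Homotopic.Quotient x₀ x₀ × Path.Homotopic.Quotient x₀ x₀ =>
    Path.Homotopic.Quotient.trans p.1 p.2) ∧
  Continuous (whiskerInv (x₀ := x₀))

namespace WhiskerAux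

variable {x₀ : X}

lemma comp_refl (a : Path.Homotopic.Quotient x₀ x₀) : Path.Homotopic.Quotient.trans a ⟦Path.refl x₀⟧ = a := by
  induction a using Quotient.ind
  exact Quotient.sound ⟨Path.Homotopy.transRefl _⟩

lemma comp_assoc (a : Path.Homotopic.Quotient x₀ x₀) (η θ : Path x₀ x₀) :
    Path.Homotopic.Quotient.trans (Path.Homotopic.Quotient.trans a ⟦η⟧) ⟦θ⟧ = Path.Homotopic.Quotient.trans a ⟦η.trans θ⟧ := by
  induction a using Quotient.ind
  exact Quotient.sound ⟨Path.Homotopy.transAssoc _ _ _⟩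

lemma comp_symm_cancel (a : Path.Homotopic.Quotient x₀ x₀) (η : Path x₀ x₀) :
    Path.Homotopic.Quotient.trans (Path.Homotopic.Quotient.trans a ⟦η⟧) ⟦η.symm⟧ = a := by
  rw [comp_assoc]
  have : (⟦η.trans η.symm⟧ : Path.Homotopic.Quotient x₀ x₀) = ⟦Path.refl x₀⟧ :=
    Quotient.sound ⟨(Path.Homotopy.reflTransSymm η).symm⟩
  rw [this, comp_refl]

lemma self_mem_whiskerB {a : Path.Homotopic.Quotient x₀ x₀} {U : Set X} (hU : x₀ ∈ U) :
    a ∈ whiskerB a U :=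
  ⟨Path.refl x₀, by
    rintro y ⟨t, rfl⟩
    simpa using hU, (comp_refl a).symm⟩

lemma whiskerB_subset {a ζ : Path.Homotopic.Quotient x₀ x₀} {U : Set X}
    (ha : a ∈ whiskerB ζ U) : whiskerB a U ⊆ whiskerB ζ U := by
  obtain ⟨η, hη, rfl⟩ := ha
  rintro g ⟨θ, hθ, rfl⟩
  refine ⟨η.trans θ, ?_, comp_assoc _ _ _⟩
  rw [Path.trans_range]
  exact Set.union_subset hη hθ

lemma mem_whiskerB_symm {a g : Path.Homotopic.Quotient x₀ x₀} {U : Set X}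
    (ha : a ∈ whiskerB g U) : g ∈ whiskerB a U := by
  obtain ⟨η, hη, rfl⟩ := ha
  exact ⟨η.symm, by rwa [Path.symm_range], (comp_symm_cancel g η).symm⟩

lemma isOpen_whiskerB (ζ : Path.Homotopic.Quotient x₀ x₀) {U : Set X}
    (hU : IsOpen U) (hx : x₀ ∈ U) :
    @IsOpen _ (whiskerTopology x₀) (whiskerB ζ U) :=
  TopologicalSpace.isOpen_generateFrom_of_mem ⟨ζ, U, hU, hx, rfl⟩

lemma isClosed_whiskerB (ζ : Path.Homotopic.Quotient x₀ x₀) {U : Set X}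
    (hU : IsOpen U) (hx : x₀ ∈ U) :
    @IsClosed _ (whiskerTopology x₀) (whiskerB ζ U) := by
  letI := whiskerTopology x₀
  rw [← isOpen_compl_iff]
  have hc : (whiskerB ζ U)ᶜ = ⋃ g ∈ (whiskerB ζ U)ᶜ, whiskerB g U := by
    ext g
    constructor
    · intro hg
      exact Set.mem_biUnion hg (self_mem_whiskerB hx)
    · intro hg
      obtain ⟨g', hg', hgg'⟩ := Set.mem_iUnion₂.mp hg
      intro hgB
      exact hg' (whiskerB_subset hgB (mem_whiskerB_symm hgg'))
  rw [hc]
  exact isOpen_biUnion fun g _ => isOpen_whiskerB g hU hx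

lemma isBasis (x₀ : X) : @TopologicalSpace.IsTopologicalBasis _ (whiskerTopology x₀)
    {S | ∃ (ζ : Path.Homotopic.Quotient x₀ x₀) (U : Set X),
      IsOpen U ∧ x₀ ∈ U ∧ S = whiskerB ζ U} := by
  letI := whiskerTopology x₀
  refine ⟨?_, ?_, rfl⟩
  · rintro S₁ ⟨ζ₁, U₁, hU₁, hx₁, rfl⟩ S₂ ⟨ζ₂, U₂, hU₂, hx₂, rfl⟩ a ⟨ha₁, ha₂⟩
    refine ⟨whiskerB a (U₁ ∩ U₂), ⟨a, U₁ ∩ U₂, hU₁.inter hU₂, ⟨hx₁, hx₂⟩, rfl⟩,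
      self_mem_whiskerB ⟨hx₁, hx₂⟩, ?_⟩
    rintro g ⟨η, hη, rfl⟩
    exact ⟨whiskerB_subset ha₁ ⟨η, fun y hy => (hη hy).1, rfl⟩,
      whiskerB_subset ha₂ ⟨η, fun y hy => (hη hy).2, rfl⟩⟩
  · apply Set.eq_univ_of_forall
    intro a
    exact ⟨whiskerB a Set.univ, ⟨a, Set.univ, isOpen_univ, trivial, rfl⟩,
      self_mem_whiskerB trivial⟩

end WhiskerAux

/-- If `π₁^wh(X, x₀)` is Hausdorff, then it is totally separated: for any two
distinct points `a, b` there is a clopen set containing `a` but not `b`. -/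
theorem whisker_totally_separated_of_t2 (x₀ : X)
    (h : @T2Space _ (whiskerTopology x₀)) :
    ∀ a b : Path.Homotopic.Quotient x₀ x₀, a ≠ b →
      ∃ C : Set (Path.Homotopic.Quotient x₀ x₀),
        @IsClopen _ (whiskerTopology x₀) C ∧ a ∈ C ∧ b ∉ C := by
  letI := whiskerTopology x₀
  intro a b hab
  obtain ⟨V, W, hV, hW, haV, hbW, hVW⟩ := t2_separation hab
  obtain ⟨S, ⟨ζ, U, hU, hxU, rfl⟩, haS, hSV⟩ :=
    (WhiskerAux.isBasis x₀).exists_subset_of_mem_open haV hV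
  refine ⟨whiskerB ζ U,
    ⟨WhiskerAux.isClosed_whiskerB ζ hU hxU, WhiskerAux.isOpen_whiskerB ζ hU hxU⟩, haS, ?_⟩
  intro hb
  exact Set.disjoint_left.mp hVW (hSV hb) hbW
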